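/- For a Hessenberg function h with degree tuple β, the quotient ℚ[x_1,...,x_n]/J_h is a finite-dimensional ℚ-vector space with basis the images of the monomials x_1^{α_1}···x_n^{α_n} with 0 ≤ α_i ≤ β_i - 1 for each i; in particular its dimension is ∏_{i=1}^{n} β_i. -/

import Mathlib

open MvPolynomial

/-- The index set of variables `x_a, x_{a+1}, ..., x_b` (1-indexed) among `x_1, ..., x_n`. -/
def seg (n a b : ℕ) : Finset (Fin n) :=
  Finset.univ.filter fun i => a ≤ (i : ℕ) + 1 ∧ (i : ℕ) + 1 ≤ b

/-- Truncated complete homogeneous symmetric polynomial of degree `d` over `ℚ`. -/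
noncomputable def teQ (n d : ℕ) (S : Finset (Fin n)) : MvPolynomial (Fin n) ℚ :=
  ∑ m ∈ S.sym d, ((m : Multiset (Fin n)).map X).prod

set_option maxHeartbeats 1600000

namespace Stmt19


lemma multiset_prod_X {n : ℕ} (s : Multiset (Fin n)) :
    ((s.map X).prod : MvPolynomial (Fin n) ℚ) = monomial (Multiset.toFinsupp s) 1 := by
  induction s using Multiset.induction_on with
  | empty => simp [MvPolynomial.monomial_zero', C_1]
  | cons a s ih =>
      rw [Multiset.map_cons, Multiset.prod_cons, ih, ← Multiset.singleton_add,
        Multiset.toFinsupp_add, Multiset.toFinsupp_singleton, X, monomial_mul, one_mul]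

lemma teQ_eq (n d : ℕ) (S : Finset (Fin n)) :
    teQ n d S = ∑ c ∈ (S.sym d).image (fun m : Sym (Fin n) d => Multiset.toFinsupp ↑m),
      monomial c (1 : ℚ) := by
  rw [teQ, Finset.sum_image]
  · exact Finset.sum_congr rfl fun m _ => multiset_prod_X _
  · intro x _ y _ hxy
    exact Sym.coe_injective (Multiset.toFinsupp.injective hxy)

lemma coeff_teQ (n d : ℕ) (S : Finset (Fin n)) (c : Fin n →₀ ℕ) :
    coeff c (teQ n d S) =
      if c ∈ (S.sym d).image (fun m : Sym (Fin n) d => Multiset.toFinsupp ↑m) then 1 else 0 := by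
  rw [teQ_eq, coeff_sum]
  simp_rw [coeff_monomial]
  exact Finset.sum_ite_eq' _ _ _

lemma mem_seg {n : ℕ} (j a : Fin n) : a ∈ seg n ((j : ℕ) + 1) n ↔ j ≤ a := by
  constructor
  · intro ha
    rw [seg, Finset.mem_filter] at ha
    exact Fin.le_def.2 (Nat.succ_le_succ_iff.1 ha.2.1)
  · intro ha
    rw [seg, Finset.mem_filter]
    exact ⟨Finset.mem_univ _, Nat.succ_le_succ (Fin.le_def.1 ha), Nat.succ_le_of_lt a.isLt⟩

lemma single_mem_image {n : ℕ} (j : Fin n) (D : ℕ) :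
    Finsupp.single j D ∈ ((seg n ((j : ℕ) + 1) n).sym D).image
      (fun m : Sym (Fin n) D => Multiset.toFinsupp ↑m) := by
  refine Finset.mem_image.2 ⟨Sym.replicate D j, ?_, ?_⟩
  · refine Finset.mem_sym_iff.2 fun a ha => ?_
    rw [Sym.mem_replicate] at ha
    rw [mem_seg, ha.2]
  · rw [Sym.coe_replicate]
    ext k
    simp [Multiset.count_replicate, Finsupp.single_apply, eq_comm]

lemma image_lt {n : ℕ} (j : Fin n) (D : ℕ) (c : Fin n →₀ ℕ)
    (hc : c ∈ ((seg n ((j : ℕ) + 1) n).sym D).image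
      (fun m : Sym (Fin n) D => Multiset.toFinsupp ↑m))
    (hne : c ≠ Finsupp.single j D) :
    toLex c < toLex (Finsupp.single j D) := by
  obtain ⟨m, hm, rfl⟩ := Finset.mem_image.1 hc
  rw [Finset.mem_sym_iff] at hm
  have hall : ∀ a ∈ (m : Multiset (Fin n)), j ≤ a := fun a ha => (mem_seg j a).1 (hm a ha)
  have hcard : Multiset.card (m : Multiset (Fin n)) = D := m.2
  have hcountlt : Multiset.count j (m : Multiset (Fin n)) < D := by
    rcases lt_or_eq_of_le ((Multiset.count_le_card j _).trans_eq hcard) with hlt | heq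
    · exact hlt
    · exfalso
      apply hne
      have h3 : (m : Multiset (Fin n)) = Multiset.replicate (Multiset.card (m : Multiset (Fin n))) j :=
        Multiset.eq_replicate_card.2 fun b hb =>
          (Multiset.count_eq_card.1 (heq.trans hcard.symm) b hb).symm
      rw [hcard] at h3
      rw [h3]
      ext k
      simp [Multiset.count_replicate, Finsupp.single_apply, eq_comm]
  refine Finsupp.Lex.lt_iff.2 ⟨j, fun k hk => ?_, ?_⟩
  · have h1 : Multiset.count k (m : Multiset (Fin n)) = 0 :=
      Multiset.count_eq_zero.2 fun hmem => absurd (hall k hmem) (not_le.2 hk)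
    have h2 : Finsupp.single j D k = 0 := Finsupp.single_eq_of_ne' (ne_of_gt hk)
    simpa [Multiset.toFinsupp_apply, h1] using h2.symm
  · simpa [Multiset.toFinsupp_apply] using hcountlt

lemma hr_teQ {n : ℕ} (j : Fin n) (D : ℕ) (c : Fin n →₀ ℕ)
    (hc : c ∈ (teQ n D (seg n ((j : ℕ) + 1) n) - monomial (Finsupp.single j D) 1).support) :
    toLex c < toLex (Finsupp.single j D) := by
  rw [MvPolynomial.mem_support_iff, coeff_sub, coeff_teQ, coeff_monomial] at hc
  by_cases h1 : c = Finsupp.single j D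
  · exfalso; apply hc; rw [if_pos, if_pos h1.symm, sub_self]; rw [h1]; exact single_mem_image j D
  · refine image_lt j D c ?_ h1
    by_contra h2
    simp [h2, Ne.symm h1] at hc

lemma teQ_split {n : ℕ} (j : Fin n) (D : ℕ) :
    teQ n D (seg n ((j : ℕ) + 1) n) =
      monomial (Finsupp.single j D) 1 +
        (teQ n D (seg n ((j : ℕ) + 1) n) - monomial (Finsupp.single j D) 1) := by
  ring




variable {n : ℕ}

/-- helper: membership in support of a sum -/
lemma supp_sum {ι : Type*} (E : Finset ι) (q : ι → MvPolynomial (Fin n) ℚ) (c : Fin n →₀ ℕ)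
    (hc : c ∈ (∑ j ∈ E, q j).support) : ∃ j ∈ E, c ∈ (q j).support := by
  by_contra hcon
  push_neg at hcon
  rw [MvPolynomial.mem_support_iff, coeff_sum] at hc
  exact hc (Finset.sum_eq_zero fun j hj =>
    MvPolynomial.notMem_support_iff.1 (hcon j hj))

/-- helper: support of `monomial u b * q` -/
lemma mem_supp_monomial_mul (u : Fin n →₀ ℕ) (b : ℚ) (q : MvPolynomial (Fin n) ℚ)
    (c : Fin n →₀ ℕ) (hc : c ∈ (monomial u b * q).support) :
    ∃ c' ∈ q.support, c = u + c' := by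
  classical
  have h1 := MvPolynomial.support_mul _ _ hc
  rw [Finset.mem_add] at h1
  obtain ⟨x, hx, y, hy, hxy⟩ := h1
  have hxu : x = u := by
    rw [MvPolynomial.support_monomial] at hx
    by_cases hb : b = 0
    · rw [if_pos hb] at hx; exact absurd hx (Finset.notMem_empty x)
    · rw [if_neg hb] at hx; exact Finset.mem_singleton.1 hx
  exact ⟨y, hy, by rw [← hxy, hxu]⟩

/-- The core "coprime leading terms" lemma : if every generator has lex-leading term
`x_i ^ (d i)` and `p = ∑ g i * f i` has all exponents `< d`, then `p = 0`. -/
lemma core (d : Fin n → ℕ) (hd : ∀ i, 0 < d i) (r : Fin n → MvPolynomial (Fin n) ℚ)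
    (hr : ∀ i, ∀ c ∈ (r i).support, toLex c < toLex (Finsupp.single i (d i)))
    (f : Fin n → MvPolynomial (Fin n) ℚ)
    (hfd : ∀ i, f i = monomial (Finsupp.single i (d i)) 1 + r i)
    (μ : Lex (Fin n →₀ ℕ)) :
    ∀ g : Fin n → MvPolynomial (Fin n) ℚ,
      (∀ i, ∀ c ∈ (g i).support, toLex (c + Finsupp.single i (d i)) ≤ μ) →
      (∀ c ∈ (∑ i, g i * f i).support, ∀ i, c i < d i) →
      (∑ i, g i * f i) = 0 := by
  induction μ using WellFoundedLT.induction with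
  | _ μ IH =>
  intro g hg hsupp
  classical
  set s : Fin n → (Fin n →₀ ℕ) := fun i => Finsupp.single i (d i) with hs
  -- the "finish" helper: once all tops are strictly below μ, use the induction hypothesis
  have finish : ∀ g' : Fin n → MvPolynomial (Fin n) ℚ,
      (∀ i, ∀ c ∈ (g' i).support, toLex (c + s i) < μ) →
      (∑ i, g' i * f i) = (∑ i, g i * f i) → (∑ i, g i * f i) = 0 := by
    intro g' hg' hEq
    by_cases hz : ∀ i, g' i = 0
    · rw [← hEq]
      exact Finset.sum_eq_zero fun i _ => by rw [hz i, zero_mul]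
    · push_neg at hz
      obtain ⟨i₁, hi₁⟩ := hz
      have hT : (Finset.univ.sigma fun i => (g' i).support).Nonempty := by
        obtain ⟨c, hc⟩ := Finset.nonempty_iff_ne_empty.2
          (fun h0 => hi₁ (MvPolynomial.support_eq_empty.1 h0))
        exact ⟨⟨i₁, c⟩, Finset.mem_sigma.2 ⟨Finset.mem_univ _, hc⟩⟩
      have hμ' : (Finset.univ.sigma fun i => (g' i).support).sup' hT
          (fun x => toLex (x.2 + s x.1)) < μ :=
        (Finset.sup'_lt_iff hT).2 fun x hx => hg' x.1 x.2 (Finset.mem_sigma.1 hx).2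
      rw [← hEq]
      refine IH _ hμ' g' (fun i c hc => ?_) (by rw [hEq]; exact hsupp)
      have hmem : (⟨i, c⟩ : Σ _ : Fin n, Fin n →₀ ℕ) ∈ Finset.univ.sigma fun i => (g' i).support :=
        Finset.mem_sigma.2 ⟨Finset.mem_univ i, hc⟩
      exact Finset.le_sup' (fun x : Σ _ : Fin n, Fin n →₀ ℕ => toLex (x.2 + s x.1)) hmem
  set ν : Fin n →₀ ℕ := ofLex μ with hν
  have hμν : μ = toLex ν := rfl
  have hlexle : ∀ (i : Fin n) (c : Fin n →₀ ℕ), toLex (c + s i) = μ → (s i ≤ ν ∧ ν - s i = c) := by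
    intro i c hcμ
    have h1 : c + s i = ν := toLex.injective (by rw [hcμ, hμν])
    exact ⟨by rw [← h1]; exact le_add_self, by rw [← h1, add_tsub_cancel_right]⟩
  -- the coefficient of ν in the sum
  have hcoeffp : coeff ν (∑ i, g i * f i) =
      ∑ i, if s i ≤ ν ∧ ν - s i ∈ (g i).support then coeff (ν - s i) (g i) else 0 := by
    rw [coeff_sum]
    refine Finset.sum_congr rfl fun i _ => ?_
    rw [hfd i, mul_add, coeff_add, coeff_mul_monomial']
    have h0 : coeff ν (g i * r i) = 0 := by
      by_contra h0
      obtain ⟨x, hx, y, hy, hxy⟩ := Finset.mem_add.1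
        (MvPolynomial.support_mul _ _ (MvPolynomial.mem_support_iff.2 h0))
      have hlt : toLex (x + y) < toLex (x + s i) := by
        rw [toLex_add, toLex_add]; exact add_lt_add_right (hr i y hy) _
      have hle := hg i x hx
      rw [hxy] at hlt
      exact absurd (lt_of_lt_of_le (hμν ▸ hlt) hle) (lt_irrefl μ)
    rw [h0, add_zero]
    by_cases h1 : s i ≤ ν
    · rw [if_pos h1, mul_one]
      by_cases h2 : ν - s i ∈ (g i).support
      · rw [if_pos ⟨h1, h2⟩]
      · rw [if_neg (fun hcon => h2 hcon.2), MvPolynomial.notMem_support_iff.1 h2]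
    · rw [if_neg h1, if_neg (fun hcon => h1 hcon.1)]
  set A : Finset (Fin n) := Finset.univ.filter (fun i => s i ≤ ν ∧ ν - s i ∈ (g i).support) with hA
  by_cases hAne : A.Nonempty
  · obtain ⟨i₀, hi₀⟩ := hAne
    have hi₀s : s i₀ ≤ ν := ((Finset.mem_filter.1 hi₀).2).1
    have hsum0 : ∑ i ∈ A, coeff (ν - s i) (g i) = 0 := by
      have h1 : coeff ν (∑ i, g i * f i) = 0 := by
        by_contra hne0
        have hi := hsupp ν (MvPolynomial.mem_support_iff.2 hne0) i₀
        have h2 : d i₀ ≤ ν i₀ := by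
          have h3 := (Finsupp.le_def.1 hi₀s) i₀
          rwa [hs, Finsupp.single_eq_same] at h3
        omega
      rw [hcoeffp] at h1
      rw [hA, Finset.sum_filter]
      exact h1
    set E : Finset (Fin n) := A.erase i₀ with hE
    have hi₀E : i₀ ∉ E := Finset.notMem_erase _ _
    have hjE : ∀ j ∈ E, j ≠ i₀ ∧ s j ≤ ν ∧ ν - s j ∈ (g j).support := by
      intro j hj
      obtain ⟨h1, h2⟩ := Finset.mem_erase.1 hj
      exact ⟨h1, (Finset.mem_filter.1 h2).2⟩
    have hss : ∀ j ∈ E, s j + s i₀ ≤ ν := by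
      intro j hj
      obtain ⟨hne, hsj, _⟩ := hjE j hj
      rw [Finsupp.le_def]
      intro k
      rw [Finsupp.add_apply]
      by_cases hk1 : k = j
      · subst hk1
        have h1 : s i₀ k = 0 := Finsupp.single_eq_of_ne' (Ne.symm hne)
        have h2 : s k k = d k := Finsupp.single_eq_same
        have h3 := (Finsupp.le_def.1 hsj) k
        rw [h2] at h3 ⊢
        rw [h1]
        omega
      · have h1 : s j k = 0 := Finsupp.single_eq_of_ne' (Ne.symm hk1)
        rw [h1, zero_add]
        by_cases hk2 : k = i₀
        · subst hk2
          have h2 := (Finsupp.le_def.1 hi₀s) k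
          rwa [Finsupp.single_eq_same] at h2 ⊢
        · rw [Finsupp.single_eq_of_ne' (Ne.symm hk2)]
          exact Nat.zero_le _
    set t : Fin n → (Fin n →₀ ℕ) := fun j => ν - s j - s i₀ with ht
    have ht1 : ∀ j ∈ E, t j + s i₀ = ν - s j := fun j hj =>
      tsub_add_cancel_of_le (le_tsub_of_add_le_left (hss j hj))
    have ht2 : ∀ j ∈ E, t j + s j = ν - s i₀ := by
      intro j hj
      have h1 : t j = ν - s i₀ - s j := tsub_right_comm
      rw [h1]
      exact tsub_add_cancel_of_le (le_tsub_of_add_le_left (by rw [add_comm]; exact hss j hj))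
    have ht3 : ∀ j ∈ E, t j + s j + s i₀ = ν := by
      intro j hj
      rw [ht2 j hj]
      exact tsub_add_cancel_of_le hi₀s
    set a : Fin n → ℚ := fun i => coeff (ν - s i) (g i) with ha
    set g' : Fin n → MvPolynomial (Fin n) ℚ := fun i =>
      if i = i₀ then g i₀ + ∑ j ∈ E, monomial (t j) (a j) * f j
      else if i ∈ E then g i - monomial (ν - s i) (a i) - monomial (t i) (a i) * r i₀
      else g i with hg'
    have hg'i₀ : g' i₀ = g i₀ + ∑ j ∈ E, monomial (t j) (a j) * f j := by simp [hg']
    have hg'E : ∀ j ∈ E, g' j = g j - monomial (ν - s j) (a j) - monomial (t j) (a j) * r i₀ := by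
      intro j hj
      simp [hg', (hjE j hj).1, hj]
    have hg'o : ∀ i, i ≠ i₀ → i ∉ E → g' i = g i := by
      intro i h1 h2
      simp [hg', h1, h2]
    -- the rewritten representation gives the same sum
    have hEq : (∑ i, g' i * f i) = ∑ i, g i * f i := by
      have h4 : (∑ i, g' i * f i) - (∑ i, g i * f i) = ∑ i, (g' i - g i) * f i := by
        rw [← Finset.sum_sub_distrib]
        exact Finset.sum_congr rfl fun i _ => (sub_mul _ _ _).symm
      have h5 : ∑ i, (g' i - g i) * f i = 0 := by
        have hout : ∀ i ∈ (Finset.univ : Finset (Fin n)), i ∉ insert i₀ E → (g' i - g i) * f i = 0 := by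
          intro i _ hi
          rw [Finset.mem_insert] at hi
          push_neg at hi
          rw [hg'o i hi.1 hi.2, sub_self, zero_mul]
        rw [← Finset.sum_subset (Finset.subset_univ (insert i₀ E)) hout]
        rw [Finset.sum_insert hi₀E]
        have h6 : (g' i₀ - g i₀) * f i₀ = (∑ j ∈ E, monomial (t j) (a j) * f j) * f i₀ := by
          rw [hg'i₀]; ring
        have h7 : ∀ j ∈ E, (g' j - g j) * f j =
            (- monomial (ν - s j) (a j) - monomial (t j) (a j) * r i₀) * f j := by
          intro j hj
          rw [hg'E j hj]
          ring
        rw [h6, Finset.sum_congr rfl h7, Finset.sum_mul, ← Finset.sum_add_distrib]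
        refine Finset.sum_eq_zero fun j hj => ?_
        have e1 : monomial (t j) (a j) * monomial (s i₀) (1 : ℚ) = monomial (ν - s j) (a j) := by
          rw [monomial_mul, mul_one, ht1 j hj]
        rw [hfd i₀, ← e1]
        ring
      rw [← sub_eq_zero, h4, h5]
    -- top coefficient of the new i₀-slot vanishes
    have htop : coeff (ν - s i₀) (g' i₀) = 0 := by
      rw [hg'i₀, coeff_add, coeff_sum]
      have hterm : ∀ j ∈ E, coeff (ν - s i₀) (monomial (t j) (a j) * f j) = a j := by
        intro j hj
        rw [hfd j, mul_add, coeff_add]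
        have e3 : monomial (t j) (a j) * monomial (s j) (1 : ℚ) = monomial (ν - s i₀) (a j) := by
          rw [monomial_mul, mul_one, ht2 j hj]
        rw [e3, coeff_monomial, if_pos rfl]
        have e4 : coeff (ν - s i₀) (monomial (t j) (a j) * r j) = 0 := by
          rw [coeff_monomial_mul']
          rw [if_pos ((ht2 j hj) ▸ le_self_add)]
          have e5 : ν - s i₀ - t j = s j := by rw [← ht2 j hj, add_tsub_cancel_left]
          rw [e5]
          have e6 : coeff (s j) (r j) = 0 := by
            by_contra e6
            exact absurd (hr j (s j) (MvPolynomial.mem_support_iff.2 e6)) (lt_irrefl _)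
          rw [e6, mul_zero]
        rw [e4, add_zero]
      rw [Finset.sum_congr rfl hterm]
      have e7 : coeff (ν - s i₀) (g i₀) = a i₀ := rfl
      rw [e7, ← Finset.sum_insert hi₀E, Finset.insert_erase hi₀]
      exact hsum0
    -- all tops of g' are strictly below μ
    have hstrict : ∀ i, ∀ c ∈ (g' i).support, toLex (c + s i) < μ := by
      intro i c hc
      by_cases h1 : i = i₀
      · subst h1
        have hne : c ≠ ν - s i := by
          intro hceq
          rw [hceq] at hc
          exact (MvPolynomial.mem_support_iff.1 hc) htop
        have hle2 : toLex (c + s i) ≤ μ := by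
          rw [hg'i₀] at hc
          rcases Finset.mem_union.1 (MvPolynomial.support_add hc) with hc1 | hc1
          · exact hg i c hc1
          · obtain ⟨j, hj, hc2⟩ := supp_sum _ _ _ hc1
            obtain ⟨c', hc', rfl⟩ := mem_supp_monomial_mul _ _ _ _ hc2
            rw [hfd j] at hc'
            rcases Finset.mem_union.1 (MvPolynomial.support_add hc') with hc3 | hc3
            · have hcsj : c' = s j := by
                rw [MvPolynomial.support_monomial, if_neg one_ne_zero] at hc3
                exact Finset.mem_singleton.1 hc3
              rw [hcsj, ht3 j hj, hμν]
            · have h8 : toLex (t j + c' + s i) = toLex (t j + s i) + toLex c' := by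
                rw [add_right_comm, toLex_add]
              have h9 : toLex (t j + s i) + toLex c' < toLex (t j + s i) + toLex (s j) :=
                add_lt_add_right (hr j c' hc3) _
              rw [h8]
              refine le_of_lt ?_
              calc toLex (t j + s i) + toLex c'
                  < toLex (t j + s i) + toLex (s j) := h9
                _ = toLex (t j + s i + s j) := (toLex_add _ _).symm
                _ = μ := by rw [add_right_comm, ht3 j hj, hμν]
        rcases hle2.lt_or_eq with h | h
        · exact h
        · exact absurd (hlexle _ c h).2 (fun hcon => hne hcon.symm)
      · by_cases h2 : i ∈ E
        · rw [hg'E i h2] at hc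
          rcases Finset.mem_union.1 (MvPolynomial.support_sub _ _ _ hc) with hc1 | hc1
          · have hne : c ≠ ν - s i := by
              intro hceq
              have h3 := MvPolynomial.mem_support_iff.1 hc1
              rw [hceq, coeff_sub, coeff_monomial, if_pos rfl] at h3
              exact h3 (sub_self _)
            have hc4 : c ∈ (g i).support := by
              rcases Finset.mem_union.1 (MvPolynomial.support_sub _ _ _ hc1) with h | h
              · exact h
              · exfalso
                apply hne
                rw [MvPolynomial.support_monomial] at h
                by_cases hai : a i = 0
                · rw [if_pos hai] at h; exact absurd h (Finset.notMem_empty c)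
                · rw [if_neg hai] at h; exact Finset.mem_singleton.1 h
            rcases (hg i c hc4).lt_or_eq with h | h
            · exact h
            · exact absurd (hlexle i c h).2 (fun hcon => hne hcon.symm)
          · obtain ⟨c', hc', rfl⟩ := mem_supp_monomial_mul _ _ _ _ hc1
            have h8 : toLex (t i + c' + s i) = toLex (t i + s i) + toLex c' := by
              rw [add_right_comm, toLex_add]
            rw [h8]
            calc toLex (t i + s i) + toLex c'
                < toLex (t i + s i) + toLex (s i₀) := add_lt_add_right (hr i₀ c' hc') _
              _ = toLex (t i + s i + s i₀) := (toLex_add _ _).symm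
              _ = μ := by rw [ht3 i h2, hμν]
        · rw [hg'o i h1 h2] at hc
          rcases (hg i c hc).lt_or_eq with h | h
          · exact h
          · exfalso
            obtain ⟨hle, heq⟩ := hlexle i c h
            apply h2
            rw [hE, Finset.mem_erase]
            refine ⟨h1, ?_⟩
            rw [hA, Finset.mem_filter]
            exact ⟨Finset.mem_univ _, hle, heq ▸ hc⟩
    exact finish g' hstrict hEq
  · -- A empty : all tops already strictly below μ
    refine finish g (fun i c hc => ?_) rfl
    rcases (hg i c hc).lt_or_eq with h | h
    · exact h
    · exfalso
      obtain ⟨hle, heq⟩ := hlexle i c h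
      exact hAne ⟨i, Finset.mem_filter.2 ⟨Finset.mem_univ _, hle, heq ▸ hc⟩⟩




lemma prod_X_pow_eq {n : ℕ} (e : Fin n → ℕ) :
    (∏ i, X i ^ e i : MvPolynomial (Fin n) ℚ) =
      monomial (Finsupp.equivFunOnFinite.symm e) 1 := by
  rw [monomial_eq, C_1, one_mul, Finsupp.prod_fintype _ _ (fun i => pow_zero _)]
  exact (Finset.prod_congr rfl fun i _ => by
    rw [Finsupp.equivFunOnFinite_symm_apply_apply]).symm

lemma mk_mem_span {n : ℕ} (J : Ideal (MvPolynomial (Fin n) ℚ))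
    (S : Submodule ℚ (MvPolynomial (Fin n) ℚ ⧸ J)) (q : MvPolynomial (Fin n) ℚ)
    (hq : ∀ c ∈ q.support, Ideal.Quotient.mk J (monomial c 1) ∈ S) :
    Ideal.Quotient.mk J q ∈ S := by
  have hq' : q = ∑ c ∈ q.support, monomial c (coeff c q) := MvPolynomial.as_sum q
  rw [hq', map_sum]
  refine Submodule.sum_mem _ fun c hc => ?_
  have h1 : (monomial c) (coeff c q) = (coeff c q) • (monomial c (1 : ℚ)) := by
    rw [smul_monomial, smul_eq_mul, mul_one]
  have h2 : Ideal.Quotient.mk J ((coeff c q) • (monomial c (1 : ℚ))) =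
      (coeff c q) • Ideal.Quotient.mk J (monomial c 1) := by
    rw [← Ideal.Quotient.mkₐ_eq_mk ℚ J]
    exact map_smul (Ideal.Quotient.mkₐ ℚ J) _ _
  rw [h1, h2]
  exact Submodule.smul_mem _ _ (hq c hc)

lemma span_aux {n : ℕ} (d : Fin n → ℕ) (r : Fin n → MvPolynomial (Fin n) ℚ)
    (hr : ∀ i, ∀ c ∈ (r i).support, toLex c < toLex (Finsupp.single i (d i)))
    (J : Ideal (MvPolynomial (Fin n) ℚ))
    (hJ : J = Ideal.span (Set.range fun i => monomial (Finsupp.single i (d i)) (1 : ℚ) + r i)) :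
    ∀ c : Fin n →₀ ℕ, Ideal.Quotient.mk J (monomial c 1) ∈
      Submodule.span ℚ (Set.range fun α : ((i : Fin n) → Fin (d i)) =>
        Ideal.Quotient.mk J (monomial (Finsupp.equivFunOnFinite.symm fun i => ((α i : ℕ))) 1)) := by
  classical
  set S := Submodule.span ℚ (Set.range fun α : ((i : Fin n) → Fin (d i)) =>
    Ideal.Quotient.mk J (monomial (Finsupp.equivFunOnFinite.symm fun i => ((α i : ℕ))) 1)) with hS
  have main : ∀ x : Lex (Fin n →₀ ℕ), Ideal.Quotient.mk J (monomial (ofLex x) 1) ∈ S := by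
    intro x
    induction x using WellFoundedLT.induction with
    | _ x IH =>
    by_cases hcase : ∃ i, d i ≤ (ofLex x) i
    · obtain ⟨i, hi⟩ := hcase
      set c : Fin n →₀ ℕ := ofLex x with hcdef
      have hle : Finsupp.single i (d i) ≤ c := by
        rw [Finsupp.le_def]
        intro k
        by_cases hk : k = i
        · subst hk; rw [Finsupp.single_eq_same]; exact hi
        · rw [Finsupp.single_eq_of_ne' (Ne.symm hk)]; exact Nat.zero_le _
      have hmm : monomial (c - Finsupp.single i (d i)) (1 : ℚ) *
          monomial (Finsupp.single i (d i)) 1 = monomial c 1 := by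
        rw [monomial_mul, one_mul, tsub_add_cancel_of_le hle]
      have hsplit : monomial c (1 : ℚ) =
          monomial (c - Finsupp.single i (d i)) 1 * (monomial (Finsupp.single i (d i)) 1 + r i) -
            monomial (c - Finsupp.single i (d i)) 1 * r i := by
        rw [mul_add, hmm]; ring
      have hJmem : (monomial (Finsupp.single i (d i)) (1 : ℚ) + r i) ∈ J := by
        rw [hJ]; exact Ideal.subset_span ⟨i, rfl⟩
      have h0 : Ideal.Quotient.mk J
          (monomial (c - Finsupp.single i (d i)) 1 *
            (monomial (Finsupp.single i (d i)) 1 + r i)) = 0 := by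
        rw [Ideal.Quotient.eq_zero_iff_mem]
        exact Ideal.mul_mem_left _ _ hJmem
      have h1 : Ideal.Quotient.mk J (monomial c 1) =
          - Ideal.Quotient.mk J (monomial (c - Finsupp.single i (d i)) 1 * r i) := by
        rw [hsplit, map_sub, h0, zero_sub]
      rw [h1]
      refine Submodule.neg_mem _ ?_
      refine mk_mem_span _ _ _ fun c' hc' => ?_
      obtain ⟨c'', hc'', rfl⟩ := mem_supp_monomial_mul _ _ _ _ hc'
      have hlt : toLex ((c - Finsupp.single i (d i)) + c'') < x := by
        have h2 := add_lt_add_right (hr i c'' hc'') (toLex (c - Finsupp.single i (d i)))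
        rw [← toLex_add, ← toLex_add, tsub_add_cancel_of_le hle] at h2
        exact h2
      have h3 := IH _ hlt
      simpa using h3
    · push_neg at hcase
      refine Submodule.subset_span ⟨fun i => ⟨(ofLex x) i, hcase i⟩, ?_⟩
      have h4 : (Finsupp.equivFunOnFinite.symm fun i =>
          ((⟨(ofLex x) i, hcase i⟩ : Fin (d i)) : ℕ)) = ofLex x := by
        ext k
        rw [Finsupp.equivFunOnFinite_symm_apply_apply]
      show Ideal.Quotient.mk J (monomial (Finsupp.equivFunOnFinite.symm fun i =>
          ((⟨(ofLex x) i, hcase i⟩ : Fin (d i)) : ℕ)) 1) = _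
      rw [h4]
  intro c
  simpa using main (toLex c)

lemma core' {n : ℕ} (d : Fin n → ℕ) (hd : ∀ i, 0 < d i)
    (r : Fin n → MvPolynomial (Fin n) ℚ)
    (hr : ∀ i, ∀ c ∈ (r i).support, toLex c < toLex (Finsupp.single i (d i)))
    (p : MvPolynomial (Fin n) ℚ)
    (hp : p ∈ Ideal.span (Set.range fun i => monomial (Finsupp.single i (d i)) (1 : ℚ) + r i))
    (hsupp : ∀ c ∈ p.support, ∀ i, c i < d i) : p = 0 := by
  classical
  rw [← Ideal.submodule_span_eq, Submodule.mem_span_range_iff_exists_fun] at hp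
  obtain ⟨g, hg⟩ := hp
  simp_rw [smul_eq_mul] at hg
  by_cases hz : ∀ i, g i = 0
  · rw [← hg]
    exact Finset.sum_eq_zero fun i _ => by rw [hz i, zero_mul]
  · push_neg at hz
    obtain ⟨i₁, hi₁⟩ := hz
    have hT : (Finset.univ.sigma fun i => (g i).support).Nonempty := by
      obtain ⟨c, hc⟩ := Finset.nonempty_iff_ne_empty.2
        (fun h0 => hi₁ (MvPolynomial.support_eq_empty.1 h0))
      exact ⟨⟨i₁, c⟩, Finset.mem_sigma.2 ⟨Finset.mem_univ _, hc⟩⟩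
    rw [← hg]
    refine core d hd r hr _ (fun i => rfl)
      ((Finset.univ.sigma fun i => (g i).support).sup' hT
        (fun x => toLex (x.2 + Finsupp.single x.1 (d x.1))))
      g (fun i c hc => ?_) (by rw [hg]; exact hsupp)
    have hmem : (⟨i, c⟩ : Σ _ : Fin n, Fin n →₀ ℕ) ∈ Finset.univ.sigma fun i => (g i).support :=
      Finset.mem_sigma.2 ⟨Finset.mem_univ i, hc⟩
    exact Finset.le_sup'
      (fun x : Σ _ : Fin n, Fin n →₀ ℕ => toLex (x.2 + Finsupp.single x.1 (d x.1))) hmem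



end Stmt19

open Stmt19 in
theorem stmt19 (n : ℕ) (hn : 0 < n) (h : Fin n → ℕ)
    (hh1 : ∀ i : Fin n, (i : ℕ) + 1 ≤ h i ∧ h i ≤ n)
    (hh2 : ∀ i j : Fin n, i ≤ j → h i ≤ h j)
    (β : Fin n → ℕ)
    (hβ : ∀ i : Fin n,
      β i = (i : ℕ) + 1 - (Finset.univ.filter fun k : Fin n => h k < (i : ℕ) + 1).card)
    (J : Ideal (MvPolynomial (Fin n) ℚ))
    (hJ : J = Ideal.span (Set.range fun j : Fin n => teQ n (β j) (seg n ((j : ℕ) + 1) n))) :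
    FiniteDimensional ℚ (MvPolynomial (Fin n) ℚ ⧸ J) ∧
    LinearIndependent ℚ (fun α : (i : Fin n) → Fin (β i) =>
      Ideal.Quotient.mk J (∏ i : Fin n, X i ^ ((α i : ℕ)))) ∧
    Submodule.span ℚ (Set.range fun α : (i : Fin n) → Fin (β i) =>
      Ideal.Quotient.mk J (∏ i : Fin n, X i ^ ((α i : ℕ)))) = ⊤ ∧
    Module.finrank ℚ (MvPolynomial (Fin n) ℚ ⧸ J) = ∏ i : Fin n, β i := by
  classical
  -- the degrees are positive
  have hd : ∀ j : Fin n, 0 < β j := by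
    intro j
    have hcard : (Finset.univ.filter fun k : Fin n => h k < (j : ℕ) + 1).card ≤ (j : ℕ) := by
      have hsub : ∀ k ∈ (Finset.univ.filter fun k : Fin n => h k < (j : ℕ) + 1),
          (k : ℕ) ∈ Finset.range (j : ℕ) := by
        intro k hk
        rw [Finset.mem_filter] at hk
        rw [Finset.mem_range]
        have := (hh1 k).1
        omega
      calc (Finset.univ.filter fun k : Fin n => h k < (j : ℕ) + 1).card
          ≤ (Finset.range (j : ℕ)).card :=
            Finset.card_le_card_of_injOn (fun k => (k : ℕ)) hsub
              (fun x _ y _ hxy => Fin.val_injective hxy)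
        _ = (j : ℕ) := Finset.card_range _
    rw [hβ j]
    omega
  -- the tails of the generators
  set r : Fin n → MvPolynomial (Fin n) ℚ := fun j =>
    teQ n (β j) (seg n ((j : ℕ) + 1) n) - monomial (Finsupp.single j (β j)) 1 with hrdef
  have hr : ∀ j, ∀ c ∈ (r j).support, toLex c < toLex (Finsupp.single j (β j)) :=
    fun j => hr_teQ j (β j)
  have hfun : (fun j : Fin n => teQ n (β j) (seg n ((j : ℕ) + 1) n)) =
      fun j => monomial (Finsupp.single j (β j)) 1 + r j := by
    funext j
    rw [hrdef]
    ring
  rw [hfun] at hJ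
  -- the monomial family
  have hfameq : (fun α : (i : Fin n) → Fin (β i) =>
        Ideal.Quotient.mk J (∏ i : Fin n, X i ^ ((α i : ℕ)))) =
      fun α : (i : Fin n) → Fin (β i) => Ideal.Quotient.mk J
        (monomial (Finsupp.equivFunOnFinite.symm fun i => ((α i : ℕ))) 1) := by
    funext α
    rw [prod_X_pow_eq]
  have hDinj : Function.Injective (fun α : ((i : Fin n) → Fin (β i)) =>
      Finsupp.equivFunOnFinite.symm fun i => ((α i : ℕ))) := by
    intro α α' hαα
    have h1 := Finsupp.equivFunOnFinite.symm.injective hαα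
    funext i
    have h2 := congrFun h1 i
    exact Fin.val_injective h2
  -- spanning
  have hspan : Submodule.span ℚ (Set.range fun α : ((i : Fin n) → Fin (β i)) =>
      Ideal.Quotient.mk J
        (monomial (Finsupp.equivFunOnFinite.symm fun i => ((α i : ℕ))) 1)) = ⊤ := by
    rw [Submodule.eq_top_iff']
    intro y
    obtain ⟨p, rfl⟩ := Ideal.Quotient.mk_surjective y
    exact mk_mem_span _ _ _ fun c _ => span_aux β r hr J hJ c
  -- linear independence
  have hli : LinearIndependent ℚ (fun α : ((i : Fin n) → Fin (β i)) =>
      Ideal.Quotient.mk J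
        (monomial (Finsupp.equivFunOnFinite.symm fun i => ((α i : ℕ))) 1)) := by
    rw [Fintype.linearIndependent_iff]
    intro cf hcf α₀
    set p := ∑ α : (i : Fin n) → Fin (β i),
      monomial (Finsupp.equivFunOnFinite.symm fun i => ((α i : ℕ))) (cf α) with hpdef
    have hmkp : Ideal.Quotient.mk J p = 0 := by
      rw [hpdef, map_sum, ← hcf]
      refine Finset.sum_congr rfl fun α _ => ?_
      rw [show (monomial (Finsupp.equivFunOnFinite.symm fun i => ((α i : ℕ)))) (cf α) =
          cf α • monomial (Finsupp.equivFunOnFinite.symm fun i => ((α i : ℕ))) (1 : ℚ) by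
        rw [smul_monomial, smul_eq_mul, mul_one]]
      rw [show Ideal.Quotient.mk J (cf α • monomial
            (Finsupp.equivFunOnFinite.symm fun i => ((α i : ℕ))) (1 : ℚ)) =
          cf α • Ideal.Quotient.mk J (monomial
            (Finsupp.equivFunOnFinite.symm fun i => ((α i : ℕ))) 1) by
        rw [← Ideal.Quotient.mkₐ_eq_mk ℚ J]
        exact map_smul (Ideal.Quotient.mkₐ ℚ J) _ _]
    have hpJ : p ∈ J := Ideal.Quotient.eq_zero_iff_mem.1 hmkp
    rw [hJ] at hpJ
    have hps : ∀ c ∈ p.support, ∀ i, c i < β i := by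
      intro c hc i
      by_contra hge
      push_neg at hge
      apply MvPolynomial.mem_support_iff.1 hc
      rw [hpdef, coeff_sum]
      refine Finset.sum_eq_zero fun α _ => ?_
      rw [coeff_monomial, if_neg]
      intro hDc
      have h5 : (Finsupp.equivFunOnFinite.symm fun i => ((α i : ℕ))) i = c i := by rw [hDc]
      rw [Finsupp.equivFunOnFinite_symm_apply_apply] at h5
      have := (α i).isLt
      omega
    have hp0 : p = 0 := core' β hd r hr p hpJ hps
    have h6 : cf α₀ = coeff (Finsupp.equivFunOnFinite.symm fun i => ((α₀ i : ℕ))) p := by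
      rw [hpdef, coeff_sum]
      rw [Finset.sum_congr rfl (fun α _ => coeff_monomial _ _ _)]
      have h7 : ∀ α ∈ (Finset.univ : Finset ((i : Fin n) → Fin (β i))),
          (if (Finsupp.equivFunOnFinite.symm fun i => ((α i : ℕ))) =
              (Finsupp.equivFunOnFinite.symm fun i => ((α₀ i : ℕ))) then cf α else 0) =
            if α = α₀ then cf α else 0 := by
        intro α _
        by_cases hα : α = α₀
        · subst hα; rw [if_pos rfl, if_pos rfl]
        · rw [if_neg hα, if_neg (fun hDc => hα (hDinj hDc))]
      rw [Finset.sum_congr rfl h7, Finset.sum_ite_eq' Finset.univ α₀ cf,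
        if_pos (Finset.mem_univ _)]
    rw [h6, hp0]
    exact coeff_zero _
  rw [hfameq]
  have hb : Module.Basis ((i : Fin n) → Fin (β i)) ℚ (MvPolynomial (Fin n) ℚ ⧸ J) :=
    Module.Basis.mk hli (le_of_eq hspan.symm)
  refine ⟨Module.Finite.of_basis hb, hli, hspan, ?_⟩
  rw [Module.finrank_eq_card_basis hb, Fintype.card_pi]
  exact Finset.prod_congr rfl fun i _ => Fintype.card_fin _
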